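/- In the 5-dimensional spin representation Δ₅ ≅ ℂ⁴, the element η ∧ dη = 2(e₁∧e₂ + e₃∧e₄)∧e₅ acts by Clifford multiplication as a symmetric endomorphism with eigenvalues −4, 0, 0, 4. -/

import Mathlib

noncomputable section
open scoped BigOperators ComplexInnerProductSpace

/-- In the 5-dimensional spin representation `Δ₅ ≅ ℂ⁴`, the element
`η ∧ dη = 2(e₁∧e₂ + e₃∧e₄)∧e₅` acts by Clifford multiplication (i.e. as
`2·e₁·e₂·e₅ + 2·e₃·e₄·e₅`) as a symmetric endomorphism with eigenvalues
`−4, 0, 0, 4`. -/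
theorem stmt_9 {Δ : Type*} [NormedAddCommGroup Δ] [InnerProductSpace ℂ Δ]
    (hdim : Module.finrank ℂ Δ = 4)
    (c : Fin 5 → Δ →ₗ[ℂ] Δ)
    (hcl : ∀ i j ψ, c i (c j ψ) + c j (c i ψ) = if i = j then (-2 : ℂ) • ψ else 0)
    (hsk : ∀ i (ψ φ : Δ), ⟪c i ψ, φ⟫ = - ⟪ψ, c i φ⟫)
    (A : Δ → Δ)
    (hA : ∀ ψ, A ψ = (2 : ℂ) • c 0 (c 1 (c 4 ψ)) + (2 : ℂ) • c 2 (c 3 (c 4 ψ))) :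
    (∀ ψ φ : Δ, ⟪A ψ, φ⟫ = ⟪ψ, A φ⟫)
    ∧ ∃ b : OrthonormalBasis (Fin 4) ℂ Δ,
        ∀ m, A (b m) = (((![-4, 0, 0, 4] : Fin 4 → ℝ) m : ℝ) : ℂ) • b m := by
  -- basic Clifford relations
  have hswap : ∀ (i j : Fin 5), i ≠ j → ∀ x, c i (c j x) = -(c j (c i x)) := by
    intro i j h x
    have h' := hcl i j x
    rw [if_neg h] at h'
    exact eq_neg_of_add_eq_zero_left h'
  have hsq : ∀ (i : Fin 5) x, c i (c i x) = -x := by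
    intro i x
    have h' := hcl i i x
    rw [if_pos rfl] at h'
    have h2 : (2 : ℂ) • c i (c i x) = (2 : ℂ) • (-x) := by
      rw [two_smul]; rw [h']; simp [neg_smul]
    exact smul_right_injective Δ two_ne_zero h2
  have s10 : ∀ x, c 1 (c 0 x) = -(c 0 (c 1 x)) := hswap 1 0 (by decide)
  have s20 : ∀ x, c 2 (c 0 x) = -(c 0 (c 2 x)) := hswap 2 0 (by decide)
  have s30 : ∀ x, c 3 (c 0 x) = -(c 0 (c 3 x)) := hswap 3 0 (by decide)
  have s40 : ∀ x, c 4 (c 0 x) = -(c 0 (c 4 x)) := hswap 4 0 (by decide)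
  have s21 : ∀ x, c 2 (c 1 x) = -(c 1 (c 2 x)) := hswap 2 1 (by decide)
  have s31 : ∀ x, c 3 (c 1 x) = -(c 1 (c 3 x)) := hswap 3 1 (by decide)
  have s41 : ∀ x, c 4 (c 1 x) = -(c 1 (c 4 x)) := hswap 4 1 (by decide)
  have s32 : ∀ x, c 3 (c 2 x) = -(c 2 (c 3 x)) := hswap 3 2 (by decide)
  have s42 : ∀ x, c 4 (c 2 x) = -(c 2 (c 4 x)) := hswap 4 2 (by decide)
  have s43 : ∀ x, c 4 (c 3 x) = -(c 3 (c 4 x)) := hswap 4 3 (by decide)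
  have q0 : ∀ x, c 0 (c 0 x) = -x := hsq 0
  have q1 : ∀ x, c 1 (c 1 x) = -x := hsq 1
  have q2 : ∀ x, c 2 (c 2 x) = -x := hsq 2
  have q3 : ∀ x, c 3 (c 3 x) = -x := hsq 3
  have q4 : ∀ x, c 4 (c 4 x) = -x := hsq 4
  set P : Δ → Δ := fun x => c 0 (c 1 (c 4 x)) with hP
  set Q : Δ → Δ := fun x => c 2 (c 3 (c 4 x)) with hQ
  have hPP : ∀ x, P (P x) = x := by
    intro x
    simp only [hP, s10, s20, s30, s40, s21, s31, s41, s32, s42, s43,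
      q0, q1, q2, q3, q4, map_neg, neg_neg]
  have hQQ : ∀ x, Q (Q x) = x := by
    intro x
    simp only [hP, hQ, s10, s20, s30, s40, s21, s31, s41, s32, s42, s43,
      q0, q1, q2, q3, q4, map_neg, neg_neg]
  have hPQ : ∀ x, P (Q x) = Q (P x) := by
    intro x
    simp only [hP, hQ, s10, s20, s30, s40, s21, s31, s41, s32, s42, s43,
      q0, q1, q2, q3, q4, map_neg, neg_neg]
  -- commutation with c 0 and c 2
  have cP0 : ∀ x, P (c 0 x) = c 0 (P x) := by
    intro x
    simp only [hP, s10, s20, s30, s40, s21, s31, s41, s32, s42, s43,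
      q0, q1, q2, q3, q4, map_neg, neg_neg]
  have cQ0 : ∀ x, Q (c 0 x) = -(c 0 (Q x)) := by
    intro x
    simp only [hQ, s10, s20, s30, s40, s21, s31, s41, s32, s42, s43,
      q0, q1, q2, q3, q4, map_neg, neg_neg]
  have cP2 : ∀ x, P (c 2 x) = -(c 2 (P x)) := by
    intro x
    simp only [hP, s10, s20, s30, s40, s21, s31, s41, s32, s42, s43,
      q0, q1, q2, q3, q4, map_neg, neg_neg]
  have cQ2 : ∀ x, Q (c 2 x) = c 2 (Q x) := by
    intro x
    simp only [hQ, s10, s20, s30, s40, s21, s31, s41, s32, s42, s43,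
      q0, q1, q2, q3, q4, map_neg, neg_neg]
  -- inner product lemmas
  have symP : ∀ x y : Δ, ⟪P x, y⟫ = ⟪x, P y⟫ := by
    intro x y
    have h1 : c 4 (c 1 (c 0 y)) = -(P y) := by
      simp only [hP, s10, s20, s30, s40, s21, s31, s41, s32, s42, s43,
        q0, q1, q2, q3, q4, map_neg, neg_neg]
    rw [hP]
    simp only [hsk 0, hsk 1, hsk 4, h1, inner_neg_right, neg_neg]
    rfl
  have symQ : ∀ x y : Δ, ⟪Q x, y⟫ = ⟪x, Q y⟫ := by
    intro x y
    have h1 : c 4 (c 3 (c 2 y)) = -(Q y) := by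
      simp only [hQ, s10, s20, s30, s40, s21, s31, s41, s32, s42, s43,
        q0, q1, q2, q3, q4, map_neg, neg_neg]
    rw [hQ]
    simp only [hsk 2, hsk 3, hsk 4, h1, inner_neg_right, neg_neg]
    rfl
  have normc : ∀ (i : Fin 5) (x : Δ), ⟪c i x, c i x⟫ = ⟪x, x⟫ := by
    intro i x
    rw [hsk, hsq, inner_neg_right, neg_neg]
  -- orthogonality from distinct eigenvalues
  have oP : ∀ x y : Δ, P x = x → P y = -y → ⟪x, y⟫ = 0 := by
    intro x y hx hy
    have h := symP x y
    rw [hx, hy, inner_neg_right] at h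
    have : ⟪x, y⟫ + ⟪x, y⟫ = 0 := by linear_combination h
    exact add_self_eq_zero.mp this
  have oQ : ∀ x y : Δ, Q x = x → Q y = -y → ⟪x, y⟫ = 0 := by
    intro x y hx hy
    have h := symQ x y
    rw [hx, hy, inner_neg_right] at h
    have : ⟪x, y⟫ + ⟪x, y⟫ = 0 := by linear_combination h
    exact add_self_eq_zero.mp this
  -- symmetry of A
  have symA : ∀ ψ φ : Δ, ⟪A ψ, φ⟫ = ⟪ψ, A φ⟫ := by
    intro ψ φ
    rw [hA, hA]
    have e1 : (2 : ℂ) • c 0 (c 1 (c 4 ψ)) = (2 : ℂ) • P ψ := rfl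
    have e2 : (2 : ℂ) • c 2 (c 3 (c 4 ψ)) = (2 : ℂ) • Q ψ := rfl
    simp only [inner_add_left, inner_add_right, inner_smul_left, inner_smul_right]
    rw [show (c 0 (c 1 (c 4 ψ))) = P ψ from rfl, show (c 2 (c 3 (c 4 ψ))) = Q ψ from rfl,
      show (c 0 (c 1 (c 4 φ))) = P φ from rfl, show (c 2 (c 3 (c 4 φ))) = Q φ from rfl,
      symP, symQ, map_ofNat]
  refine ⟨symA, ?_⟩
  -- linearity helpers
  have Padd : ∀ x y : Δ, P (x + y) = P x + P y := by intro x y; simp [hP, map_add]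
  have Psub : ∀ x y : Δ, P (x - y) = P x - P y := by intro x y; simp [hP, map_sub]
  have Qadd : ∀ x y : Δ, Q (x + y) = Q x + Q y := by intro x y; simp [hQ, map_add]
  have Qsub : ∀ x y : Δ, Q (x - y) = Q x - Q y := by intro x y; simp [hQ, map_sub]
  have Psmul : ∀ (a : ℂ) (x : Δ), P (a • x) = a • P x := by intro a x; simp [hP, map_smul]
  have Qsmul : ∀ (a : ℂ) (x : Δ), Q (a • x) = a • Q x := by intro a x; simp [hQ, map_smul]
  have cinj : ∀ (i : Fin 5) (x : Δ), c i x = 0 → x = 0 := by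
    intro i x h
    have h2 := hsq i x
    rw [h, map_zero] at h2
    exact neg_eq_zero.mp h2.symm
  -- a nonzero vector
  haveI : FiniteDimensional ℂ Δ := FiniteDimensional.of_finrank_pos (by rw [hdim]; norm_num)
  haveI : Nontrivial Δ := by
    have : 0 < Module.finrank ℂ Δ := by rw [hdim]; norm_num
    exact Module.nontrivial_of_finrank_pos this
  obtain ⟨ψ0, hψ0⟩ := exists_ne (0 : Δ)
  -- find a nonzero simultaneous +1-eigenvector of P and Q
  have key : ∃ w : Δ, w ≠ 0 ∧ P w = w ∧ Q w = w := by
    set u := ψ0 + P ψ0 + Q ψ0 + P (Q ψ0) with hu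
    set a := ψ0 - P ψ0 + Q ψ0 - P (Q ψ0) with ha
    set b := ψ0 + P ψ0 - Q ψ0 - P (Q ψ0) with hb
    set d := ψ0 - P ψ0 - Q ψ0 + P (Q ψ0) with hd
    have huP : P u = u := by
      rw [hu, Padd, Padd, Padd, hPP, hPP, hPQ]
      abel
    have huQ : Q u = u := by
      rw [hu, Qadd, Qadd, Qadd, hQQ, ← hPQ, ← hPQ, hQQ]
      abel
    have haP : P a = -a := by
      rw [ha, Psub, Padd, Psub, hPP, hPP, hPQ]
      abel
    have haQ : Q a = a := by
      rw [ha, Qsub, Qadd, Qsub, hQQ, ← hPQ, ← hPQ, hQQ]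
      abel
    have hbP : P b = b := by
      rw [hb, Psub, Psub, Padd, hPP, hPP, hPQ]
      abel
    have hbQ : Q b = -b := by
      rw [hb, Qsub, Qsub, Qadd, hQQ, ← hPQ, ← hPQ, hQQ]
      abel
    have hdP : P d = -d := by
      rw [hd, Padd, Psub, Psub, hPP, hPP, hPQ]
      abel
    have hdQ : Q d = -d := by
      rw [hd, Qadd, Qsub, Qsub, hQQ, ← hPQ, ← hPQ, hQQ]
      abel
    by_cases hu0 : u = 0
    · by_cases ha0 : a = 0
      · by_cases hb0 : b = 0
        · -- then d = 4 ψ0 ≠ 0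
          have hsum : u + a + b + d = (4 : ℂ) • ψ0 := by
            rw [hu, ha, hb, hd]; module
          have hd0 : d ≠ 0 := by
            intro h
            rw [hu0, ha0, hb0, h] at hsum
            simp only [add_zero, zero_add] at hsum
            exact hψ0 (by
              have := hsum.symm
              rwa [smul_eq_zero_iff_right (by norm_num : (4:ℂ) ≠ 0)] at this)
          refine ⟨c 0 (c 2 d), ?_, ?_, ?_⟩
          · intro h; exact hd0 (cinj 2 d (cinj 0 _ h))
          · rw [cP0, cP2, hdP]; simp
          · rw [cQ0, cQ2, hdQ]; simp
        · refine ⟨c 0 b, ?_, ?_, ?_⟩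
          · intro h; exact hb0 (cinj 0 b h)
          · rw [cP0, hbP]
          · rw [cQ0, hbQ, map_neg, neg_neg]
      · refine ⟨c 2 a, ?_, ?_, ?_⟩
        · intro h; exact ha0 (cinj 2 a h)
        · rw [cP2, haP, map_neg, neg_neg]
        · rw [cQ2, haQ]
    · exact ⟨u, hu0, huP, huQ⟩
  obtain ⟨w, hw0, hwP, hwQ⟩ := key
  set e : Δ := ((‖w‖ : ℂ))⁻¹ • w with he
  have heP : P e = e := by rw [he, Psmul, hwP]
  have heQ : Q e = e := by rw [he, Qsmul, hwQ]
  have hnorme : ‖e‖ = 1 := norm_smul_inv_norm hw0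
  have hee : ⟪e, e⟫ = 1 := by
    rw [inner_self_eq_norm_sq_to_K, hnorme]; norm_num
  -- the four eigenvectors
  set w0 : Δ := c 0 (c 2 e) with hw0'
  set w1 : Δ := c 2 e with hw1'
  set w2 : Δ := c 0 e with hw2'
  have hv0P : P w0 = -w0 := by rw [hw0', cP0, cP2, heP, map_neg]
  have hv0Q : Q w0 = -w0 := by rw [hw0', cQ0, cQ2, heQ]
  have hv1P : P w1 = -w1 := by rw [hw1', cP2, heP]
  have hv1Q : Q w1 = w1 := by rw [hw1', cQ2, heQ]
  have hv2P : P w2 = w2 := by rw [hw2', cP0, heP]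
  have hv2Q : Q w2 = -w2 := by rw [hw2', cQ0, heQ]
  have n0 : ⟪w0, w0⟫ = 1 := by rw [hw0', normc, normc, hee]
  have n1 : ⟪w1, w1⟫ = 1 := by rw [hw1', normc, hee]
  have n2 : ⟪w2, w2⟫ = 1 := by rw [hw2', normc, hee]
  have o10 : ⟪w1, w0⟫ = 0 := oQ w1 w0 hv1Q hv0Q
  have o20 : ⟪w2, w0⟫ = 0 := oP w2 w0 hv2P hv0P
  have o30 : ⟪e, w0⟫ = 0 := oP e w0 heP hv0P
  have o21 : ⟪w2, w1⟫ = 0 := oP w2 w1 hv2P hv1P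
  have o31 : ⟪e, w1⟫ = 0 := oP e w1 heP hv1P
  have o32 : ⟪e, w2⟫ = 0 := oQ e w2 heQ hv2Q
  have o01 : ⟪w0, w1⟫ = 0 := inner_eq_zero_symm.mp o10
  have o02 : ⟪w0, w2⟫ = 0 := inner_eq_zero_symm.mp o20
  have o03 : ⟪w0, e⟫ = 0 := inner_eq_zero_symm.mp o30
  have o12 : ⟪w1, w2⟫ = 0 := inner_eq_zero_symm.mp o21
  have o13 : ⟪w1, e⟫ = 0 := inner_eq_zero_symm.mp o31
  have o23 : ⟪w2, e⟫ = 0 := inner_eq_zero_symm.mp o32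
  set v : Fin 4 → Δ := ![w0, w1, w2, e] with hv
  have hon : Orthonormal ℂ v := by
    rw [orthonormal_iff_ite]
    intro i j
    fin_cases i <;> fin_cases j <;>
      simp [-inner_self_eq_norm_sq_to_K, hv, n0, n1, n2, hee, o01, o02, o03, o10, o12, o13, o20, o21, o23, o30, o31, o32]
  have hcard : Fintype.card (Fin 4) = Module.finrank ℂ Δ := by simp [hdim]
  have hsp : ⊤ ≤ Submodule.span ℂ (Set.range v) := by
    rw [← coe_basisOfLinearIndependentOfCardEqFinrank hon.linearIndependent hcard]
    rw [(basisOfLinearIndependentOfCardEqFinrank hon.linearIndependent hcard).span_eq]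
  refine ⟨OrthonormalBasis.mk hon hsp, ?_⟩
  intro m
  rw [OrthonormalBasis.coe_mk]
  have hAv : ∀ x : Δ, A x = (2:ℂ) • P x + (2:ℂ) • Q x := hA
  fin_cases m
  · show A w0 = ((-4 : ℝ) : ℂ) • w0
    rw [hAv, hv0P, hv0Q]; push_cast; module
  · show A w1 = ((0 : ℝ) : ℂ) • w1
    rw [hAv, hv1P, hv1Q]; push_cast; module
  · show A w2 = ((0 : ℝ) : ℂ) • w2
    rw [hAv, hv2P, hv2Q]; push_cast; module
  · show A e = ((4 : ℝ) : ℂ) • e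
    rw [hAv, heP, heQ]; push_cast; module
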